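/- Let a be a signed digit expansion of x ∈ ℝ and k ∈ ℕ be such that for every n > k not both a n and a (n+1) are nonzero. Then every x' ∈ ℝ with |x - x'| ≤ 2^(-k)/6 admits a signed digit expansion b with b n = a n for all n ≤ k and such that for every n > k+1 not both b n and b (n+1) are nonzero. -/

import Mathlib

/-- `a : ℤ → ℤ` is a signed digit expansion of the real number `x`. -/
def IsSignedDigitExpansion (a : ℤ → ℤ) (x : ℝ) : Prop :=
  (∀ n : ℤ, a n = -1 ∨ a n = 0 ∨ a n = 1) ∧
  (∃ N : ℕ, ∀ n : ℤ, n ≤ -(N : ℤ) → a n = 0) ∧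
  Summable (fun n : ℤ => (a n : ℝ) * (2 : ℝ) ^ (-n)) ∧
  x = ∑' n : ℤ, (a n : ℝ) * (2 : ℝ) ^ (-n)


namespace SDP

noncomputable def dig (u : ℝ) : ℤ := if u > 1/3 then 1 else if u < -(1/3) then -1 else 0

lemma dig_cases (u : ℝ) : dig u = -1 ∨ dig u = 0 ∨ dig u = 1 := by
  unfold dig; split_ifs <;> simp

lemma abs_dig_le (u : ℝ) : |(dig u : ℝ)| ≤ 1 := by
  rcases dig_cases u with h | h | h <;> rw [h] <;> norm_num

lemma dig_eq_zero {u : ℝ} (h1 : -(1/3) ≤ u) (h2 : u ≤ 1/3) : dig u = 0 := by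
  unfold dig; split_ifs with hh1 hh2 <;> first | rfl | linarith

lemma dig_pos {u : ℝ} (h : dig u = 1) : 1/3 < u := by
  unfold dig at h; split_ifs at h with h1 h2
  all_goals first | assumption | exact absurd h (by norm_num)

lemma dig_neg {u : ℝ} (h : dig u = -1) : u < -(1/3) := by
  unfold dig at h; split_ifs at h with h1 h2
  all_goals first | assumption | exact absurd h (by norm_num)

noncomputable def urec (y : ℝ) : ℕ → ℝ
  | 0 => y
  | m+1 => 2 * urec y m - dig (urec y m)

noncomputable def dseq (y : ℝ) (m : ℕ) : ℤ := dig (urec y m)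

lemma abs_step {u : ℝ} (h : |u| ≤ 5/6) : |2 * u - dig u| ≤ 2/3 := by
  rw [abs_le] at h ⊢
  unfold dig; split_ifs with h1 h2 <;> push_cast <;> constructor <;> linarith

lemma urec_abs_le (y : ℝ) (hy : |y| ≤ 5/6) : ∀ m, |urec y m| ≤ 5/6
  | 0 => hy
  | m+1 => le_trans (abs_step (urec_abs_le y hy m)) (by norm_num)

lemma urec_abs_le' (y : ℝ) (hy : |y| ≤ 5/6) (m : ℕ) : |urec y (m+1)| ≤ 2/3 :=
  abs_step (urec_abs_le y hy m)

lemma dseq_nonadj (y : ℝ) (hy : |y| ≤ 5/6) (m : ℕ) :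
    dseq y (m+1) = 0 ∨ dseq y (m+2) = 0 := by
  by_cases h : dseq y (m+1) = 0
  · exact Or.inl h
  · right
    have hb := urec_abs_le' y hy m
    rw [abs_le] at hb
    have hstep : urec y (m+2) = 2 * urec y (m+1) - dig (urec y (m+1)) := rfl
    unfold dseq at h ⊢
    rw [hstep]
    rcases dig_cases (urec y (m+1)) with hd | hd | hd
    · have hu := dig_neg hd
      rw [hd]; push_cast
      exact dig_eq_zero (by linarith [hb.1]) (by linarith)
    · exact absurd hd h
    · have hu := dig_pos hd
      rw [hd]; push_cast
      exact dig_eq_zero (by linarith) (by linarith [hb.2])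

lemma partial_sum (y : ℝ) : ∀ M : ℕ,
    ∑ m ∈ Finset.range M, (dseq y m : ℝ) * (1/2)^(m+1) = y - urec y M * (1/2)^M
  | 0 => by simp [urec]
  | M+1 => by
    rw [Finset.sum_range_succ, partial_sum y M]
    have hstep : urec y (M+1) = 2 * urec y M - dig (urec y M) := rfl
    rw [hstep]
    unfold dseq
    ring

lemma summable_digits (c : ℕ → ℤ) (hc : ∀ m, |(c m : ℝ)| ≤ 1) :
    Summable (fun m : ℕ => (c m : ℝ) * (1/2)^(m+1)) := by
  apply Summable.of_norm_bounded (g := fun m => (1/2:ℝ)^m)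
    (summable_geometric_of_lt_one (by norm_num) (by norm_num))
  intro m
  rw [Real.norm_eq_abs, abs_mul, abs_pow]
  calc |(c m : ℝ)| * |(1/2:ℝ)|^(m+1) ≤ 1 * (1/2:ℝ)^(m+1) := by
        rw [abs_of_nonneg (by norm_num : (0:ℝ) ≤ 1/2)]
        exact mul_le_mul_of_nonneg_right (hc m) (by positivity)
    _ ≤ (1/2:ℝ)^m := by
        rw [one_mul, pow_succ]
        nlinarith [pow_pos (by norm_num : (0:ℝ) < 1/2) m]

lemma hasSum_dseq (y : ℝ) (hy : |y| ≤ 5/6) :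
    HasSum (fun m : ℕ => (dseq y m : ℝ) * (1/2)^(m+1)) y := by
  have hs := summable_digits (dseq y) (fun m => abs_dig_le _)
  have ht := hs.hasSum.tendsto_sum_nat
  have h2 : Filter.Tendsto (fun M => ∑ m ∈ Finset.range M, (dseq y m : ℝ) * (1/2)^(m+1))
      Filter.atTop (nhds y) := by
    simp only [partial_sum y]
    have h0 : Filter.Tendsto (fun M : ℕ => urec y M * (1/2:ℝ)^M) Filter.atTop (nhds 0) := by
      have hg : Filter.Tendsto (fun M : ℕ => 5/6 * (1/2:ℝ)^M) Filter.atTop (nhds 0) :=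
        by simpa using (tendsto_pow_atTop_nhds_zero_of_lt_one (by norm_num : (0:ℝ) ≤ 1/2)
          (by norm_num)).const_mul (5/6 : ℝ)
      apply squeeze_zero_norm _ hg
      intro M
      rw [norm_mul, norm_pow, Real.norm_eq_abs, Real.norm_eq_abs,
        abs_of_nonneg (by norm_num : (0:ℝ) ≤ 1/2)]
      exact mul_le_mul_of_nonneg_right (urec_abs_le y hy M) (by positivity)
    have h2' : Filter.Tendsto (fun M : ℕ => y - urec y M * (1/2:ℝ)^M) Filter.atTop
        (nhds (y - 0)) := Filter.Tendsto.sub tendsto_const_nhds h0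
    simpa using h2' 
  have heq : (∑' m, (dseq y m : ℝ) * (1/2)^(m+1)) = y := tendsto_nhds_unique ht h2
  have := hs.hasSum; rwa [heq] at this

lemma ico_bound (c : ℕ → ℤ) (hc : ∀ m, |(c m : ℝ)| ≤ 1)
    (hna : ∀ m, c m = 0 ∨ c (m+1) = 0) :
    ∀ n j, |∑ m ∈ Finset.Ico j (j+n), (c m : ℝ) * (1/2)^(m+1)| ≤ 2/3 * (1/2)^j := by
  intro n
  induction n using Nat.strong_induction_on with
  | _ n IH =>
    intro j
    have hp : (0:ℝ) < (1/2)^j := by positivity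
    match n with
    | 0 => simp
    | 1 =>
      have h1 : Finset.Ico j (j+1) = {j} := Nat.Ico_succ_singleton j
      rw [h1, Finset.sum_singleton, abs_mul, abs_pow,
        abs_of_nonneg (by norm_num : (0:ℝ) ≤ 1/2)]
      calc |(c j : ℝ)| * (1/2)^(j+1) ≤ 1 * (1/2)^(j+1) :=
            mul_le_mul_of_nonneg_right (hc j) (by positivity)
        _ ≤ 2/3 * (1/2)^j := by rw [one_mul, pow_succ]; nlinarith
    | (n+2) =>
      have hbot : ∑ m ∈ Finset.Ico j (j+(n+2)), (c m : ℝ) * (1/2)^(m+1)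
          = (c j : ℝ) * (1/2)^(j+1) + ∑ m ∈ Finset.Ico (j+1) (j+(n+2)), (c m : ℝ) * (1/2)^(m+1) :=
        Finset.sum_eq_sum_Ico_succ_bot (by omega) _
      by_cases hz : c j = 0
      · have : j + (n+2) = (j+1) + (n+1) := by omega
        rw [hbot, hz, this]
        simp only [Int.cast_zero, zero_mul, zero_add]
        calc |∑ m ∈ Finset.Ico (j+1) ((j+1)+(n+1)), (c m : ℝ) * (1/2)^(m+1)|
            ≤ 2/3 * (1/2)^(j+1) := IH (n+1) (by omega) (j+1)
          _ ≤ 2/3 * (1/2)^j := by rw [pow_succ]; nlinarith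
      · have hz1 : c (j+1) = 0 := (hna j).resolve_left hz
        have hbot2 : ∑ m ∈ Finset.Ico (j+1) (j+(n+2)), (c m : ℝ) * (1/2)^(m+1)
            = (c (j+1) : ℝ) * (1/2)^(j+1+1) + ∑ m ∈ Finset.Ico (j+2) (j+(n+2)), (c m : ℝ) * (1/2)^(m+1) := by
          have := Finset.sum_eq_sum_Ico_succ_bot (a := j+1) (b := j+(n+2))
            (by omega) (fun m => (c m : ℝ) * (1/2)^(m+1))
          simpa [show j+1+1 = j+2 by omega] using this
        have hrest : |∑ m ∈ Finset.Ico (j+2) (j+(n+2)), (c m : ℝ) * (1/2)^(m+1)|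
            ≤ 2/3 * (1/2)^(j+2) := by
          have := IH n (by omega) (j+2)
          rwa [show (j+2)+n = j+(n+2) by omega] at this
        rw [hbot, hbot2, hz1]
        simp only [Int.cast_zero, zero_mul, zero_add]
        calc |(c j : ℝ) * (1/2)^(j+1) + ∑ m ∈ Finset.Ico (j+2) (j+(n+2)), (c m : ℝ) * (1/2)^(m+1)|
            ≤ |(c j : ℝ) * (1/2)^(j+1)| + |∑ m ∈ Finset.Ico (j+2) (j+(n+2)), (c m : ℝ) * (1/2)^(m+1)| :=
              abs_add_le _ _
          _ ≤ 1 * (1/2)^(j+1) + 2/3 * (1/2)^(j+2) := by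
              refine add_le_add ?_ hrest
              rw [abs_mul, abs_pow, abs_of_nonneg (by norm_num : (0:ℝ) ≤ 1/2)]
              exact mul_le_mul_of_nonneg_right (hc j) (by positivity)
          _ ≤ 2/3 * (1/2)^j := by rw [pow_succ, pow_succ, pow_succ]; nlinarith

lemma abs_tsum_le {f : ℕ → ℝ} (hf : Summable f) {B : ℝ}
    (h : ∀ M, |∑ m ∈ Finset.range M, f m| ≤ B) : |∑' m, f m| ≤ B := by
  have ht := hf.hasSum.tendsto_sum_nat
  exact le_of_tendsto ((continuous_abs.tendsto _).comp ht) (Filter.Eventually.of_forall h)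

def sdSet (k : ℕ) : Set ℤ := {n : ℤ | n ≤ (k:ℤ)}

def sdEquiv (k : ℕ) : ℕ ≃ ↥(sdSet k)ᶜ where
  toFun m := ⟨(k:ℤ)+1+m, by simp only [Set.mem_compl_iff, sdSet, Set.mem_setOf_eq]; omega⟩
  invFun n := ((n : ℤ) - k - 1).toNat
  left_inv m := by
    show ((((k:ℤ)+1+m) - k - 1)).toNat = m
    omega
  right_inv n := by
    have hn : ¬ ((n : ℤ) ≤ (k:ℤ)) := n.2
    apply Subtype.ext
    show (k:ℤ)+1+(((n:ℤ) - k - 1).toNat : ℤ) = (n:ℤ)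
    omega

noncomputable def bdig (a : ℤ → ℤ) (k : ℕ) (y : ℝ) (n : ℤ) : ℤ :=
  if n ≤ (k:ℤ) then a n else dseq y (n - k - 1).toNat

lemma bdig_le {a : ℤ → ℤ} {k : ℕ} {y : ℝ} {n : ℤ} (h : n ≤ (k:ℤ)) :
    bdig a k y n = a n := by unfold bdig; exact if_pos h

lemma bdig_gt {a : ℤ → ℤ} {k : ℕ} {y : ℝ} {n : ℤ} (h : ¬ n ≤ (k:ℤ)) :
    bdig a k y n = dseq y (n - k - 1).toNat := by unfold bdig; exact if_neg h

end SDP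

open SDP in
set_option maxHeartbeats 1000000 in
/-- If the digits of a signed digit expansion of `x` are non-adjacent beyond
position `k`, then every `x'` with `|x - x'| ≤ 2^(-k)/6` has a signed digit
expansion agreeing with the given one up to position `k` whose digits are
non-adjacent beyond position `k+1`. -/
theorem signedDigit_perturbation_nonAdjacent (a : ℤ → ℤ) (x : ℝ) (k : ℕ)
    (ha : IsSignedDigitExpansion a x)
    (hna : ∀ n : ℤ, (k : ℤ) < n → a n = 0 ∨ a (n + 1) = 0) :
    ∀ x' : ℝ, |x - x'| ≤ (2 : ℝ) ^ (-(k : ℤ)) / 6 →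
      ∃ b : ℤ → ℤ, IsSignedDigitExpansion b x' ∧
        (∀ n : ℤ, n ≤ (k : ℤ) → b n = a n) ∧
        (∀ n : ℤ, (k : ℤ) + 1 < n → b n = 0 ∨ b (n + 1) = 0) := by
  obtain ⟨haD, ⟨N, hN⟩, haS, haX⟩ := ha
  intro x' hx'
  have habs : ∀ n : ℤ, |(a n : ℝ)| ≤ 1 := by
    intro n; rcases haD n with h|h|h <;> rw [h] <;> norm_num
  have h2 : (2:ℝ) ≠ 0 := by norm_num
  have hprod : (2:ℝ)^(-(k:ℤ)) * (2:ℝ)^((k:ℤ)) = 1 := by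
    rw [← zpow_add₀ h2]; simp
  have hzc : ∀ m : ℕ, (2:ℝ)^(-((k:ℤ)+1+m)) = (2:ℝ)^(-(k:ℤ)) * (1/2)^(m+1) := by
    intro m
    have e1 : ((2:ℝ))^(-((k:ℤ)+1+m)) = (2:ℝ)^(-(k:ℤ)) * ((2:ℝ)^(((m+1:ℕ) : ℤ)))⁻¹ := by
      rw [← zpow_neg, ← zpow_add₀ h2]
      congr 1
      push_cast
      ring
    rw [e1, one_div, inv_pow, zpow_natCast]
  set H : ℝ := ∑' (n : ↥(sdSet k)), ((a n : ℝ) * (2:ℝ)^(-(n:ℤ))) with hH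
  have hsplit : H + (∑' (n : ↥(sdSet k)ᶜ), ((a n : ℝ) * (2:ℝ)^(-(n:ℤ)))) = x := by
    rw [haX, hH]
    exact haS.tsum_subtype_add_tsum_subtype_compl _
  set c : ℕ → ℤ := fun m => a ((k:ℤ)+1+m) with hc
  have hcabs : ∀ m, |(c m : ℝ)| ≤ 1 := fun m => habs _
  have hcsum : Summable (fun m : ℕ => (c m : ℝ) * (1/2:ℝ)^(m+1)) := summable_digits c hcabs
  have hcna : ∀ m, c m = 0 ∨ c (m+1) = 0 := by
    intro m
    rcases hna ((k:ℤ)+1+m) (by omega) with h|h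
    · exact Or.inl h
    · right
      rw [hc]
      show a ((k:ℤ)+1+((m+1 : ℕ) : ℤ)) = 0
      rw [show (k:ℤ)+1+((m+1 : ℕ) : ℤ) = (k:ℤ)+1+m+1 by push_cast; ring]
      exact h
  have htail_a : (∑' (n : ↥(sdSet k)ᶜ), ((a n : ℝ) * (2:ℝ)^(-(n:ℤ))))
      = (2:ℝ)^(-(k:ℤ)) * ∑' m : ℕ, (c m : ℝ) * (1/2:ℝ)^(m+1) := by
    rw [← Equiv.tsum_eq (sdEquiv k), ← tsum_mul_left]
    congr 1
    funext m
    show (a ((k:ℤ)+1+m) : ℝ) * (2:ℝ)^(-((k:ℤ)+1+m)) = _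
    rw [hzc m]
    ring
  have hTc : |∑' m : ℕ, (c m : ℝ) * (1/2:ℝ)^(m+1)| ≤ 2/3 := by
    apply abs_tsum_le hcsum
    intro M
    have h0 := ico_bound c hcabs hcna M 0
    rw [show (0:ℕ)+M = M from by omega, pow_zero, mul_one] at h0
    rwa [Finset.range_eq_Ico]
  have hkpos : (0:ℝ) < (2:ℝ)^(-(k:ℤ)) := by positivity
  have hxH : |x - H| ≤ 2/3 * (2:ℝ)^(-(k:ℤ)) := by
    have hx : x - H = (2:ℝ)^(-(k:ℤ)) * ∑' m : ℕ, (c m : ℝ) * (1/2:ℝ)^(m+1) := by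
      rw [← hsplit, htail_a]; ring
    rw [hx, abs_mul, abs_of_nonneg hkpos.le]
    calc (2:ℝ)^(-(k:ℤ)) * |∑' m : ℕ, (c m : ℝ) * (1/2:ℝ)^(m+1)|
        ≤ (2:ℝ)^(-(k:ℤ)) * (2/3) := mul_le_mul_of_nonneg_left hTc hkpos.le
      _ = 2/3 * (2:ℝ)^(-(k:ℤ)) := by ring
  set y : ℝ := (x' - H) * (2:ℝ)^((k:ℤ)) with hy_def
  have hy : |y| ≤ 5/6 := by
    have h1 : |x' - H| ≤ 2/3 * (2:ℝ)^(-(k:ℤ)) + (2:ℝ)^(-(k:ℤ))/6 := by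
      calc |x' - H| = |(x - H) - (x - x')| := by ring_nf
        _ ≤ |x - H| + |x - x'| := abs_sub _ _
        _ ≤ 2/3 * (2:ℝ)^(-(k:ℤ)) + (2:ℝ)^(-(k:ℤ))/6 := add_le_add hxH hx'
    have hk : (0:ℝ) < (2:ℝ)^((k:ℤ)) := by positivity
    rw [hy_def, abs_mul, abs_of_nonneg hk.le]
    calc |x' - H| * (2:ℝ)^((k:ℤ))
        ≤ (2/3 * (2:ℝ)^(-(k:ℤ)) + (2:ℝ)^(-(k:ℤ))/6) * (2:ℝ)^((k:ℤ)) :=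
          mul_le_mul_of_nonneg_right h1 hk.le
      _ = 5/6 := by linear_combination (5/6 : ℝ) * hprod
  have hdsum : HasSum (fun m : ℕ => (dseq y m : ℝ) * (1/2:ℝ)^(m+1)) y := hasSum_dseq y hy
  refine ⟨bdig a k y, ?_, ?_, ?_⟩
  · -- IsSignedDigitExpansion
    have hb_agree : ∀ n : ℤ, n ≤ (k:ℤ) → bdig a k y n = a n := fun n hn => bdig_le hn
    have hb_tail : ∀ m : ℕ, bdig a k y ((k:ℤ)+1+m) = dseq y m := by
      intro m
      rw [bdig_gt (by omega)]
      congr 1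
      omega
    have htail_b : HasSum ((fun n : ℤ => (bdig a k y n : ℝ) * (2:ℝ)^(-n)) ∘ ((↑) : ↥(sdSet k)ᶜ → ℤ)) (x' - H) := by
      rw [← Equiv.hasSum_iff (sdEquiv k)]
      have hmul := hdsum.mul_right ((2:ℝ)^(-(k:ℤ)))
      have hyval : y * (2:ℝ)^(-(k:ℤ)) = x' - H := by
        rw [hy_def, mul_assoc, mul_comm ((2:ℝ)^((k:ℤ))), hprod, mul_one]
      rw [hyval] at hmul
      have heq : (((fun n : ℤ => (bdig a k y n : ℝ) * (2:ℝ)^(-n)) ∘ ((↑) : ↥(sdSet k)ᶜ → ℤ)) ∘ (sdEquiv k))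
          = fun m : ℕ => ((dseq y m : ℝ) * (1/2:ℝ)^(m+1)) * (2:ℝ)^(-(k:ℤ)) := by
        funext m
        show (bdig a k y ((k:ℤ)+1+m) : ℝ) * (2:ℝ)^(-((k:ℤ)+1+m)) = _
        rw [hb_tail m, hzc m]
        ring
      rw [heq]
      exact hmul
    have hhead : HasSum ((fun n : ℤ => (bdig a k y n : ℝ) * (2:ℝ)^(-n)) ∘ ((↑) : ↥(sdSet k) → ℤ)) H := by
      have hsub : Summable (fun n : ↥(sdSet k) => (a n : ℝ) * (2:ℝ)^(-(n:ℤ))) :=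
        haS.subtype _
      have heq : ((fun n : ℤ => (bdig a k y n : ℝ) * (2:ℝ)^(-n)) ∘ ((↑) : ↥(sdSet k) → ℤ))
          = (fun n : ↥(sdSet k) => (a n : ℝ) * (2:ℝ)^(-(n:ℤ))) := by
        funext n
        show (bdig a k y (n:ℤ) : ℝ) * (2:ℝ)^(-(n:ℤ)) = _
        rw [hb_agree n n.2]
      rw [heq, hH]
      exact hsub.hasSum
    have hfull : HasSum (fun n : ℤ => (bdig a k y n : ℝ) * (2:ℝ)^(-n)) x' := by
      have hadd := HasSum.add_compl hhead htail_b
      rwa [show H + (x' - H) = x' by ring] at hadd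
    refine ⟨?_, ⟨N, ?_⟩, hfull.summable, hfull.tsum_eq.symm⟩
    · intro n
      by_cases h : n ≤ (k:ℤ)
      · rw [bdig_le h]; exact haD n
      · rw [bdig_gt h]; exact dig_cases _
    · intro n hn
      have hnk : n ≤ (k:ℤ) := by omega
      rw [hb_agree n hnk]
      exact hN n hn
  · exact fun n hn => bdig_le hn
  · intro n hn
    have h1 : bdig a k y n = dseq y ((n - (k:ℤ) - 2).toNat + 1) := by
      rw [bdig_gt (by omega)]
      congr 1
      omega
    have h2 : bdig a k y (n+1) = dseq y ((n - (k:ℤ) - 2).toNat + 2) := by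
      rw [bdig_gt (by omega)]
      congr 1
      omega
    rw [h1, h2]
    exact dseq_nonadj y hy _
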